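/- Assume additionally that g satisfies lim_{‖x‖→∞} g(x)/g(x−y)=1 for every y∈ℝ², and that β_I(R)<∞ for every R>0. Then for all λ_p>0 and c̄>0, lim_{R→∞} P_p(λ_p c̄)/P₁(R,c̄,λ_p) = 0, where P_p(λ_p c̄)=exp(−λ_p c̄ β_I(R)); equivalently, ∫_{ℝ²} (c̄ β(R,y) − 1 + e^{−c̄ β(R,y)}) dy → ∞ as R→∞. -/

import Mathlib

open MeasureTheory ProbabilityTheory Filter Real
open scoped ProbabilityTheory

local notation "E2" => EuclideanSpace ℝ (Fin 2)

lemma phi_nonneg' {t : ℝ} : 0 ≤ t - (1 - Real.exp (-t)) := by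
  have := Real.add_one_le_exp (-t); linarith
lemma phi_le' {t : ℝ} (ht : 0 ≤ t) : t - (1 - Real.exp (-t)) ≤ t := by
  have : Real.exp (-t) ≤ 1 := Real.exp_le_one_iff.2 (by linarith)
  linarith
lemma phi_pos' {t : ℝ} (ht : 0 < t) : 0 < t - (1 - Real.exp (-t)) := by
  have := Real.add_one_lt_exp (x := -t) (by linarith)
  linarith

set_option maxHeartbeats 1000000

/-- For large transmitter–receiver distance `R`, the success probability of the
Poisson network is negligible compared with the factor `P₁` of the clustered
network: `P_p(λ_p c̄)/P₁(R,c̄,λ_p) → 0` as `R → ∞`. -/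
theorem stmt_5
    (g f : E2 → ℝ) (T lamp cbar : ℝ)
    (hT : 0 < T) (hlamp : 0 < lamp) (hcbar : 0 < cbar)
    (hg_pos : ∀ x : E2, x ≠ 0 → 0 < g x)
    (hg_cont : ContinuousOn g {(0 : E2)}ᶜ)
    (hg_mono : ∀ x y : E2, x ≠ 0 → y ≠ 0 → ‖x‖ ≤ ‖y‖ → g y ≤ g x)
    (hg_int : ∀ ε : ℝ, 0 < ε → IntegrableOn g (Metric.ball (0 : E2) ε)ᶜ)
    (hg_ratio : ∀ y : E2,
      Tendsto (fun x : E2 => g x / g (x - y)) (Filter.comap norm atTop) (nhds 1))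
    (hf_meas : Measurable f) (hf_nonneg : ∀ x, 0 ≤ f x)
    (hf_prob : ∫ x, f x = 1)
    (hf_iso : ∀ x y : E2, ‖x‖ = ‖y‖ → f x = f y)
    (z : ℝ → E2) (hz : ∀ R, z R = EuclideanSpace.single (0 : Fin 2) R)
    (β : ℝ → E2 → ℝ)
    (hβ : ∀ R y, β R y = ∫ x, g (x - y - z R) / (g (z R) / T + g (x - y - z R)) * f x)
    (βI : ℝ → ℝ) (hβI : ∀ R, βI R = ∫ u, g u / (g (z R) / T + g u))
    (hβI_fin : ∀ R : ℝ, 0 < R → Integrable fun u : E2 => g u / (g (z R) / T + g u))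
    (P1 : ℝ → ℝ)
    (hP1 : ∀ R, P1 R = Real.exp (-(lamp * ∫ y, (1 - Real.exp (-(cbar * β R y)))))) :
    Tendsto (fun R => Real.exp (-(lamp * cbar * βI R)) / P1 R) atTop (nhds 0) := by
  classical
  have hgm : Measurable g := measurable_of_continuousOn_compl_singleton 0 hg_cont
  have hf_int : Integrable f := by
    by_contra h
    rw [integral_undef h] at hf_prob; norm_num at hf_prob
  have hg_rad : ∀ u : E2, g (-u) = g u := by
    intro u
    rcases eq_or_ne u 0 with h | h
    · simp [h]
    · have h1 : (-u : E2) ≠ 0 := by simpa using h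
      have h2 := hg_mono u (-u) h h1 (by simp)
      have h3 := hg_mono (-u) u h1 h (by simp)
      linarith
  have hz_norm : ∀ R : ℝ, 0 ≤ R → ‖z R‖ = R := by
    intro R hR; rw [hz]; simp [EuclideanSpace.norm_single, abs_of_nonneg hR]
  have hz_ne : ∀ R : ℝ, 0 < R → z R ≠ 0 := by
    intro R hR h
    have := hz_norm R hR.le
    rw [h] at this; simp at this; exact hR.ne this
  set a : ℝ → ℝ := fun R => g (z R) / T with ha
  have ha_pos : ∀ R : ℝ, 0 < R → 0 < a R := fun R hR =>
    div_pos (hg_pos _ (hz_ne R hR)) hT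
  set G : E2 → ℝ := fun u => if u = 0 then 0 else g u with hG
  have hGm : Measurable G := Measurable.ite (measurableSet_eq) measurable_const hgm
  have hG_nonneg : ∀ u, 0 ≤ G u := by
    intro u
    by_cases h : u = 0 <;> simp [hG, h]
    exact (hg_pos u h).le
  have hG_eq : ∀ u : E2, u ≠ 0 → G u = g u := by intro u h; simp [hG, h]
  set q : ℝ → E2 → ℝ := fun R u => G u / (a R + G u) with hq
  have hq_nonneg : ∀ R : ℝ, 0 < R → ∀ u, 0 ≤ q R u := by
    intro R hR u
    exact div_nonneg (hG_nonneg u) (by linarith [ha_pos R hR, hG_nonneg u])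
  have hq_le_one : ∀ R : ℝ, 0 < R → ∀ u, q R u ≤ 1 := by
    intro R hR u
    rw [div_le_one (by linarith [ha_pos R hR, hG_nonneg u])]
    linarith [ha_pos R hR]
  have hq_meas : ∀ R, Measurable (q R) := fun R => hGm.div (measurable_const.add hGm)
  have ae_ne : ∀ c : E2, ∀ᵐ x : E2, x ≠ c := by
    intro c
    have : volume ({c} : Set E2) = 0 := measure_singleton c
    rw [MeasureTheory.ae_iff]
    simpa using this
  have hq_int : ∀ R : ℝ, 0 < R → Integrable (q R) := by
    intro R hR
    refine (hβI_fin R hR).congr ?_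
    filter_upwards [ae_ne (0 : E2)] with u hu
    simp only [hq, ha, hG_eq u hu]
  -- β in q-form
  have hβq : ∀ R : ℝ, 0 < R → ∀ y, β R y = ∫ x, q R (x - y - z R) * f x := by
    intro R hR y
    rw [hβ]
    refine integral_congr_ae ?_
    filter_upwards [ae_ne (y + z R)] with x hx
    have hx0 : x - y - z R ≠ 0 := by
      intro h0
      exact hx (by rwa [sub_sub, sub_eq_zero] at h0)
    simp only [hq, ha, hG_eq _ hx0]
  have hβI_q : ∀ R : ℝ, 0 < R → βI R = ∫ u, q R u := by
    intro R hR
    rw [hβI]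
    refine integral_congr_ae ?_
    filter_upwards [ae_ne (0 : E2)] with u hu
    simp only [hq, ha, hG_eq u hu]
  -- integrability in x and bounds on β
  have hint_x : ∀ R : ℝ, 0 < R → ∀ y : E2,
      Integrable (fun x => q R (x - y - z R) * f x) := by
    intro R hR y
    refine hf_int.mono' ?_ ?_
    · have : Measurable fun x : E2 => q R (x - y - z R) * f x :=
        ((hq_meas R).comp ((measurable_id.sub_const y).sub_const (z R))).mul hf_meas
      exact this.aestronglyMeasurable
    · filter_upwards with x
      rw [Real.norm_eq_abs, abs_of_nonneg (mul_nonneg (hq_nonneg R hR _) (hf_nonneg x))]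
      calc q R (x - y - z R) * f x ≤ 1 * f x :=
            mul_le_mul_of_nonneg_right (hq_le_one R hR _) (hf_nonneg x)
        _ = f x := one_mul _
  have hβ_nonneg : ∀ R : ℝ, 0 < R → ∀ y, 0 ≤ β R y := by
    intro R hR y
    rw [hβq R hR y]
    exact integral_nonneg fun x => mul_nonneg (hq_nonneg R hR _) (hf_nonneg x)
  have hβ_le_one : ∀ R : ℝ, 0 < R → ∀ y, β R y ≤ 1 := by
    intro R hR y
    rw [hβq R hR y]
    calc (∫ x, q R (x - y - z R) * f x) ≤ ∫ x, f x := by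
          refine integral_mono (hint_x R hR y) hf_int fun x => ?_
          calc q R (x - y - z R) * f x ≤ 1 * f x :=
                mul_le_mul_of_nonneg_right (hq_le_one R hR _) (hf_nonneg x)
            _ = f x := one_mul _
      _ = 1 := hf_prob
  -- Fubini
  have hFub : ∀ R : ℝ, 0 < R →
      Integrable (fun y => β R y) ∧ (∫ y, β R y) = βI R := by
    intro R hR
    set K : E2 × E2 → ℝ := fun pr => q R (pr.1 - pr.2 - z R) * f pr.1 with hK
    have hKmeas : Measurable K :=
      ((hq_meas R).comp ((measurable_fst.sub measurable_snd).sub measurable_const)).mul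
        (hf_meas.comp measurable_fst)
    have hc : Integrable (fun u : E2 => q R u) := hq_int R hR
    have hKint : Integrable K (volume.prod volume) := by
      rw [MeasureTheory.integrable_prod_iff hKmeas.aestronglyMeasurable]
      constructor
      · filter_upwards with x
        have : (fun y => K (x, y)) = fun y => q R ((x - z R) - y) * f x := by
          funext y; simp only [hK, sub_right_comm]
        rw [this]
        exact (hc.comp_sub_left (x - z R)).mul_const (f x)
      · have : (fun x => ∫ y, ‖K (x, y)‖) = fun x => (∫ u, q R u) * f x := by
          funext x
          have h1 : (fun y => ‖K (x, y)‖) = fun y => q R ((x - z R) - y) * f x := by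
            funext y
            simp only [hK, sub_right_comm, Real.norm_eq_abs]
            exact abs_of_nonneg (mul_nonneg (hq_nonneg R hR _) (hf_nonneg x))
          rw [h1, MeasureTheory.integral_mul_const,
            MeasureTheory.integral_sub_left_eq_self (q R) volume (x - z R)]
        rw [this]
        exact hf_int.const_mul _
    constructor
    · have h2 : Integrable (fun y => ∫ x, K (x, y)) := hKint.integral_prod_right
      refine h2.congr ?_
      filter_upwards with y
      rw [hβq R hR y]
    · have hswap := MeasureTheory.integral_integral_swap
        (f := fun x y => K (x, y)) (μ := (volume : Measure E2)) (ν := (volume : Measure E2))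
        hKint
      have h3 : (∫ y, β R y) = ∫ y, ∫ x, K (x, y) := by
        refine integral_congr_ae ?_
        filter_upwards with y
        rw [hβq R hR y]
      have h4 : (∫ x, ∫ y, K (x, y)) = βI R := by
        have h5 : (fun x => ∫ y, K (x, y)) = fun x => (∫ u, q R u) * f x := by
          funext x
          have h1 : (fun y => K (x, y)) = fun y => q R ((x - z R) - y) * f x := by
            funext y; simp only [hK, sub_right_comm]
          rw [h1, MeasureTheory.integral_mul_const,
            MeasureTheory.integral_sub_left_eq_self (q R) volume (x - z R)]
        rw [h5, integral_const_mul, hf_prob, mul_one, hβI_q R hR]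
      rw [h3, ← hswap, h4]
  -- pointwise convergence of β to p
  have hz_comap : Tendsto z atTop (comap norm atTop) := by
    rw [tendsto_comap_iff]
    have heq : (fun R => ‖z R‖) =ᶠ[atTop] id := by
      filter_upwards [eventually_ge_atTop (0 : ℝ)] with R hR
      exact hz_norm R hR
    exact Tendsto.congr' heq.symm tendsto_id
  have hratio : ∀ d : E2, Tendsto (fun R => g (z R) / g (z R - d)) atTop (nhds 1) :=
    fun d => (hg_ratio d).comp hz_comap
  set p : ℝ := (1 / T + 1)⁻¹ with hp
  have hp_pos : 0 < p := by positivity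
  have hβ_lim : ∀ y : E2, Tendsto (fun R => β R y) atTop (nhds p) := by
    intro y
    have key : ∀ x : E2, Tendsto (fun R => q R (x - y - z R)) atTop (nhds p) := by
      intro x
      have hden : (1 / T + 1 : ℝ) ≠ 0 := by positivity
      have h1 : Tendsto (fun R => (g (z R) / g (z R - (x - y)) / T + 1)⁻¹) atTop (nhds p) := by
        have h2 := (((hratio (x - y)).div_const T).add_const 1).inv₀ hden
        simpa [hp] using h2
      refine Tendsto.congr' ?_ h1
      filter_upwards [eventually_gt_atTop (max ‖x - y‖ 0)] with R hR
      have hR0 : 0 < R := lt_of_le_of_lt (le_max_right _ _) hR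
      have hw_ne : x - y - z R ≠ 0 := by
        intro h0
        rw [sub_eq_zero] at h0
        have hnz : ‖z R‖ = R := hz_norm R hR0.le
        rw [← h0] at hnz
        exact absurd hnz (by have := lt_of_le_of_lt (le_max_left ‖x - y‖ 0) hR; linarith)
      have hgw : 0 < g (x - y - z R) := hg_pos _ hw_ne
      have hgz : 0 < g (z R) := hg_pos _ (hz_ne R hR0)
      have hzd : g (z R - (x - y)) = g (x - y - z R) := by
        rw [← hg_rad (x - y - z R)]
        congr 1
        abel
      rw [hzd]
      simp only [hq, ha, hG_eq _ hw_ne]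
      rw [eq_comm]
      field_simp
    have hdct : Tendsto (fun R => ∫ x, q R (x - y - z R) * f x) atTop
        (nhds (∫ x, p * f x)) := by
      refine tendsto_integral_filter_of_dominated_convergence f ?_ ?_ hf_int ?_
      · filter_upwards [eventually_gt_atTop (0 : ℝ)] with R hR
        exact (hint_x R hR y).aestronglyMeasurable
      · filter_upwards [eventually_gt_atTop (0 : ℝ)] with R hR
        filter_upwards with x
        rw [Real.norm_eq_abs, abs_of_nonneg (mul_nonneg (hq_nonneg R hR _) (hf_nonneg x))]
        calc q R (x - y - z R) * f x ≤ 1 * f x :=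
              mul_le_mul_of_nonneg_right (hq_le_one R hR _) (hf_nonneg x)
          _ = f x := one_mul _
      · filter_upwards with x
        exact (key x).mul_const (f x)
    rw [integral_const_mul, hf_prob, mul_one] at hdct
    refine Tendsto.congr' ?_ hdct
    filter_upwards [eventually_gt_atTop (0 : ℝ)] with R hR
    exact (hβq R hR y).symm
  -- φc facts
  set φc : ℝ → ℝ := fun t => cbar * t - (1 - Real.exp (-(cbar * t))) with hφc
  have hφc_cont : Continuous φc := by
    rw [hφc]; fun_prop
  have hφc_nonneg : ∀ t : ℝ, 0 ≤ φc t := by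
    intro t
    have := Real.add_one_le_exp (-(cbar * t))
    simp only [hφc]
    linarith
  have hφc_le : ∀ t : ℝ, 0 ≤ t → φc t ≤ cbar * t := by
    intro t ht
    have h1 : Real.exp (-(cbar * t)) ≤ 1 := Real.exp_le_one_iff.2 (by nlinarith)
    simp only [hφc]
    linarith
  have hφcp_pos : 0 < φc p := by
    have := Real.add_one_lt_exp (x := -(cbar * p)) (by nlinarith)
    simp only [hφc]
    linarith
  -- integrability of the φc composition, and the key integral identity
  have hφβ_meas : ∀ R : ℝ, 0 < R →
      AEStronglyMeasurable (fun y => φc (β R y)) (volume : Measure E2) := by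
    intro R hR
    exact hφc_cont.comp_aestronglyMeasurable (hFub R hR).1.aestronglyMeasurable
  have hφβ_int : ∀ R : ℝ, 0 < R → Integrable (fun y => φc (β R y)) := by
    intro R hR
    refine Integrable.mono' ((hFub R hR).1.const_mul cbar) (hφβ_meas R hR) ?_
    filter_upwards with y
    rw [Real.norm_eq_abs, abs_of_nonneg (hφc_nonneg _)]
    exact hφc_le _ (hβ_nonneg R hR y)
  have hIeq : ∀ R : ℝ, 0 < R →
      (∫ y, (1 - Real.exp (-(cbar * β R y)))) = cbar * βI R - ∫ y, φc (β R y) := by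
    intro R hR
    have h0 : (fun y : E2 => 1 - Real.exp (-(cbar * β R y)))
        = fun y => cbar * β R y - φc (β R y) := by
      funext y; simp only [hφc]; ring
    rw [h0, integral_sub ((hFub R hR).1.const_mul cbar) (hφβ_int R hR),
      integral_const_mul, (hFub R hR).2]
  -- the exponent tends to -∞
  have hE : Tendsto (fun R => -(lamp * cbar * βI R)
      + lamp * ∫ y, (1 - Real.exp (-(cbar * β R y)))) atTop atBot := by
    rw [tendsto_atBot]
    intro b
    -- choose a large ball
    have hball : Tendsto (fun r : ℝ =>
        lamp * (φc p * (volume (Metric.ball (0 : E2) r)).toReal)) atTop atTop := by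
      have hv : 0 < (volume (Metric.ball (0 : E2) 1)).toReal :=
        ENNReal.toReal_pos (Metric.measure_ball_pos _ _ one_pos).ne' measure_ball_lt_top.ne
      have heq : ∀ᶠ r : ℝ in atTop,
          lamp * φc p * (volume (Metric.ball (0 : E2) 1)).toReal * r ^ 2
          = lamp * (φc p * (volume (Metric.ball (0 : E2) r)).toReal) := by
        filter_upwards [eventually_ge_atTop (0 : ℝ)] with r hr
        rw [Measure.addHaar_ball _ _ hr]
        rw [ENNReal.toReal_mul, ENNReal.toReal_ofReal (by positivity)]
        have h2 : Module.finrank ℝ (EuclideanSpace ℝ (Fin 2)) = 2 := by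
          simp [finrank_euclideanSpace]
        rw [h2]
        ring
      refine Tendsto.congr' heq ?_
      exact (tendsto_pow_atTop (two_ne_zero)).const_mul_atTop
        (by positivity : (0:ℝ) < lamp * φc p * (volume (Metric.ball (0 : E2) 1)).toReal)
    obtain ⟨r, hrb⟩ := (hball.eventually_ge_atTop (-b + 1)).exists
    set M : ℝ := φc p * (volume (Metric.ball (0 : E2) r)).toReal with hM
    clear_value M
    have hvol_lt : volume (Metric.ball (0 : E2) r) < ⊤ := measure_ball_lt_top
    -- convergence of the ball integrals
    have hJ : Tendsto (fun R => ∫ y in Metric.ball (0 : E2) r, φc (β R y)) atTop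
        (nhds M) := by
      have hdct : Tendsto (fun R => ∫ y in Metric.ball (0 : E2) r, φc (β R y)) atTop
          (nhds (∫ _y in Metric.ball (0 : E2) r, φc p)) := by
        refine tendsto_integral_filter_of_dominated_convergence (fun _ => cbar) ?_ ?_ ?_ ?_
        · filter_upwards [eventually_gt_atTop (0 : ℝ)] with R hR
          exact (hφβ_meas R hR).restrict
        · filter_upwards [eventually_gt_atTop (0 : ℝ)] with R hR
          filter_upwards with y
          rw [Real.norm_eq_abs, abs_of_nonneg (hφc_nonneg _)]
          calc φc (β R y) ≤ cbar * β R y := hφc_le _ (hβ_nonneg R hR y)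
            _ ≤ cbar * 1 := by
                have := hβ_le_one R hR y
                nlinarith
            _ = cbar := mul_one _
        · rw [integrable_const_iff]
          right
          exact ⟨by rw [Measure.restrict_apply_univ]; exact hvol_lt⟩
        · filter_upwards with y
          exact hφc_cont.continuousAt.tendsto.comp (hβ_lim y)
      rw [setIntegral_const, smul_eq_mul, mul_comm, measureReal_def, ← hM] at hdct
      exact hdct
    have hJb : ∀ᶠ R in atTop,
        M - 1 / lamp < ∫ y in Metric.ball (0 : E2) r, φc (β R y) :=
      hJ.eventually (eventually_gt_nhds (by
        have : 0 < 1 / lamp := by positivity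
        linarith))
    filter_upwards [hJb, eventually_gt_atTop (0 : ℝ)] with R hJR hR
    have hEeq : -(lamp * cbar * βI R) + lamp * ∫ y, (1 - Real.exp (-(cbar * β R y)))
        = -(lamp * ∫ y, φc (β R y)) := by
      rw [hIeq R hR]; ring
    rw [hEeq]
    have hsub : (∫ y in Metric.ball (0 : E2) r, φc (β R y)) ≤ ∫ y, φc (β R y) := by
      refine setIntegral_le_integral (hφβ_int R hR) ?_
      filter_upwards with y
      exact hφc_nonneg _
    have h9 : M - 1 / lamp ≤ ∫ y, φc (β R y) := le_trans hJR.le hsub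
    set I : ℝ := ∫ y, φc (β R y) with hI
    clear_value I
    have h6 : lamp * (M - 1 / lamp) ≤ lamp * I := mul_le_mul_of_nonneg_left h9 hlamp.le
    have h7 : lamp * (M - 1 / lamp) = lamp * M - 1 := by
      rw [mul_sub, mul_one_div, div_self hlamp.ne']
    linarith only [h6, h7, hrb]
  -- final assembly
  have hfin : (fun R => Real.exp (-(lamp * cbar * βI R)) / P1 R)
      = fun R => Real.exp (-(lamp * cbar * βI R)
          + lamp * ∫ y, (1 - Real.exp (-(cbar * β R y)))) := by
    funext R
    rw [hP1, ← Real.exp_sub]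
    congr 1
    ring
  rw [hfin]
  exact Real.tendsto_exp_atBot.comp hE
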